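/- (Separation of K×K-orbits by τ_n-bi-equivariant functions.) Let n ∈ ℤ and let x, y ∈ G be such that their K×K-orbits are disjoint, i.e., y ∉ KxK = {k_{θ₁} · x · k_{θ₂} : θ₁, θ₂ ∈ ℝ}. Then there exists a continuous, compactly supported function F : G → ℂ satisfying F(k_{θ₁} · g · k_{θ₂}) = e^{in(θ₁+θ₂)} F(g) for all g ∈ G and all θ₁, θ₂ ∈ ℝ, such that F(x) ≠ F(y). -/

import Mathlib

open Matrix MeasureTheory

noncomputable section

/-- The space of 3×3 real matrices. -/
abbrev M3 := Matrix (Fin 3) (Fin 3) ℝ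

/-- The matrix `J = diag(1, 1, −1)`. -/
def Jmat : M3 := Matrix.diagonal ![1, 1, -1]

/-- The rotation matrix `k_θ`. -/
def kmat (θ : ℝ) : M3 :=
  !![Real.cos θ, -Real.sin θ, 0; Real.sin θ, Real.cos θ, 0; 0, 0, 1]

lemma kmat_mul_neg (θ : ℝ) : kmat θ * kmat (-θ) = 1 := by
  have h1 : (1 : M3) = !![1,0,0; 0,1,0; 0,0,1] := by
    ext i j; fin_cases i <;> fin_cases j <;>
      simp [Matrix.one_apply, Matrix.vecHead, Matrix.vecTail]
  rw [h1, kmat, kmat, Matrix.mul_fin_three]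
  ext i j; fin_cases i <;> fin_cases j <;>
    simp [Real.cos_neg, Real.sin_neg, Matrix.vecHead, Matrix.vecTail] <;>
    nlinarith [Real.sin_sq_add_cos_sq θ]

/-- The rotation `k_θ` as an element of `GL(3, ℝ)`. -/
def kGL (θ : ℝ) : GL (Fin 3) ℝ :=
  ⟨kmat θ, kmat (-θ), kmat_mul_neg θ, by simpa using kmat_mul_neg (-θ)⟩

lemma continuous_kmat : Continuous kmat := by
  apply continuous_matrix
  intro i j
  fin_cases i <;> fin_cases j <;>
    simp [kmat, Matrix.vecHead, Matrix.vecTail] <;> fun_prop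

lemma continuous_kGL : Continuous kGL := by
  rw [Units.continuous_iff]
  exact ⟨continuous_kmat, continuous_kmat.comp continuous_neg⟩

/-- `SO(2,1)(ℝ)`, realised as the subgroup of `GL(3, ℝ)` consisting of the matrices of
determinant `1` that preserve the quadratic form given by `J = diag(1, 1, −1)`. -/
def SO21 : Subgroup (GL (Fin 3) ℝ) where
  carrier := {g | (g : M3).det = 1 ∧ (g : M3)ᵀ * Jmat * (g : M3) = Jmat}
  one_mem' := by constructor <;> simp
  mul_mem' := by
    rintro a b ⟨ha1, ha2⟩ ⟨hb1, hb2⟩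
    refine ⟨by simp [ha1, hb1], ?_⟩
    have : ((a * b : GL (Fin 3) ℝ) : M3)ᵀ * Jmat * ((a * b : GL (Fin 3) ℝ) : M3)
        = (b : M3)ᵀ * ((a : M3)ᵀ * Jmat * (a : M3)) * (b : M3) := by
      simp only [Units.val_mul, Matrix.transpose_mul, Matrix.mul_assoc]
    rw [this, ha2, hb2]
  inv_mem' := by
    rintro g ⟨h1, h2⟩
    have hAB : (g : M3) * ((g⁻¹ : GL (Fin 3) ℝ) : M3) = 1 := by
      rw [← Units.val_mul, mul_inv_cancel, Units.val_one]
    refine ⟨by simp [Matrix.coe_units_inv, Matrix.det_nonsing_inv, h1], ?_⟩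
    calc ((g⁻¹ : GL (Fin 3) ℝ) : M3)ᵀ * Jmat * ((g⁻¹ : GL (Fin 3) ℝ) : M3)
        = ((g⁻¹ : GL (Fin 3) ℝ) : M3)ᵀ * ((g : M3)ᵀ * Jmat * (g : M3))
            * ((g⁻¹ : GL (Fin 3) ℝ) : M3) := by rw [h2]
      _ = ((g : M3) * ((g⁻¹ : GL (Fin 3) ℝ) : M3))ᵀ * Jmat
            * ((g : M3) * ((g⁻¹ : GL (Fin 3) ℝ) : M3)) := by
          simp only [Matrix.transpose_mul, Matrix.mul_assoc]
      _ = Jmat := by rw [hAB]; simp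

lemma kGL_mem (θ : ℝ) : kGL θ ∈ SO21 := by
  constructor
  · show (kmat θ).det = 1
    simp [kmat, Matrix.det_fin_three]
    nlinarith [Real.sin_sq_add_cos_sq θ]
  · show (kmat θ)ᵀ * Jmat * kmat θ = Jmat
    have hJ : Jmat = !![1,0,0; 0,1,0; 0,0,-1] := by
      ext i j; fin_cases i <;> fin_cases j <;>
        simp [Jmat, Matrix.vecHead, Matrix.vecTail]
    have hT : (kmat θ)ᵀ = !![Real.cos θ, Real.sin θ, 0; -Real.sin θ, Real.cos θ, 0; 0, 0, 1] := by
      ext i j; fin_cases i <;> fin_cases j <;> simp [kmat, Matrix.vecHead, Matrix.vecTail]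
    rw [hJ, hT, kmat, Matrix.mul_fin_three, Matrix.mul_fin_three]
    ext i j; fin_cases i <;> fin_cases j <;>
      simp [Matrix.vecHead, Matrix.vecTail] <;> nlinarith [Real.sin_sq_add_cos_sq θ]

/-- The rotation `k_θ` as an element of `SO(2,1)(ℝ)`. -/
def kS (θ : ℝ) : ↥SO21 := ⟨kGL θ, kGL_mem θ⟩

lemma continuous_kS : Continuous kS := continuous_kGL.subtype_mk _

lemma kS_zero : kS 0 = 1 := by
  apply Subtype.ext
  apply Units.ext
  show kmat 0 = 1
  ext i j; fin_cases i <;> fin_cases j <;>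
    simp [kmat, Matrix.one_apply, Matrix.vecHead, Matrix.vecTail]

lemma kS_mem_cc (θ : ℝ) : kS θ ∈ connectedComponent (1 : ↥SO21) := by
  have h : Set.range kS ⊆ connectedComponent (1 : ↥SO21) := by
    apply IsPreconnected.subset_connectedComponent
    · rw [← Set.image_univ]
      exact isPreconnected_univ.image kS continuous_kS.continuousOn
    · exact ⟨0, kS_zero⟩
  exact h ⟨θ, rfl⟩

/-- `G = SO(2,1)°`, the connected component of the identity in `SO(2,1)(ℝ)`. -/
def SO21c : Subgroup ↥SO21 := Subgroup.connectedComponentOfOne ↥SO21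

/-- The rotation `k_θ` as an element of `G = SO(2,1)°`; the maximal compact subgroup
`K` is the set of all `kG θ`, `θ ∈ ℝ`. -/
def kG (θ : ℝ) : ↥SO21c := ⟨kS θ, kS_mem_cc θ⟩

/-- The underlying 3×3 matrix of an element of `G = SO(2,1)°`. -/
def toM (g : ↥SO21c) : M3 := (((g : ↥SO21) : GL (Fin 3) ℝ) : M3)

section Aux
open Real

lemma kmat_mul (a b : ℝ) : kmat a * kmat b = kmat (a + b) := by
  rw [kmat, kmat, kmat, Matrix.mul_fin_three]
  ext i j; fin_cases i <;> fin_cases j <;>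
    simp [Matrix.vecHead, Matrix.vecTail, Real.cos_add, Real.sin_add] <;> ring

lemma kG_mul (a b : ℝ) : kG a * kG b = kG (a + b) :=
  Subtype.ext (Subtype.ext (Units.ext (kmat_mul a b)))

lemma kG_zero : kG 0 = 1 := Subtype.ext kS_zero

lemma kmat_periodic : Function.Periodic kmat (2 * π) := by
  intro θ
  unfold kmat
  rw [Real.cos_add_two_pi θ, Real.sin_add_two_pi θ]

lemma kG_periodic : Function.Periodic kG (2 * π) := by
  intro θ
  exact Subtype.ext (Subtype.ext (Units.ext (kmat_periodic θ)))

lemma continuous_kG : Continuous kG := continuous_kS.subtype_mk _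

lemma toM_mul (a b : ↥SO21c) : toM (a * b) = toM a * toM b := rfl

lemma toM_kG (θ : ℝ) : toM (kG θ) = kmat θ := rfl

lemma toM_injective : Function.Injective toM := by
  intro a b h
  exact Subtype.ext (Subtype.ext (Units.ext h))

lemma toM_one : toM 1 = 1 := rfl

lemma kG_eq_one {θ : ℝ} (hc : Real.cos θ = 1) (hs : Real.sin θ = 0) : kG θ = 1 := by
  apply toM_injective
  rw [toM_kG, toM_one, kmat, hc, hs]
  ext i j; fin_cases i <;> fin_cases j <;>
    simp [Matrix.one_apply, Matrix.vecHead, Matrix.vecTail]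

end Aux
section Topo

instance : LocallyCompactSpace M3 := Pi.locallyCompactSpace_of_finite

instance : LocallyCompactSpace M3ᵐᵒᵖ :=
  (MulOpposite.opHomeomorph (M := M3)).locallyCompactSpace_iff.mp inferInstance

lemma isClosedEmbedding_embedProduct :
    Topology.IsClosedEmbedding (Units.embedProduct M3) := by
  refine ⟨Units.isEmbedding_embedProduct, ?_⟩
  have : Set.range (Units.embedProduct M3) =
      {p : M3 × M3ᵐᵒᵖ | p.1 * p.2.unop = 1 ∧ p.2.unop * p.1 = 1} := by
    ext p
    constructor
    · rintro ⟨u, rfl⟩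
      exact ⟨u.mul_inv, u.inv_mul⟩
    · rintro ⟨h1, h2⟩
      exact ⟨⟨p.1, p.2.unop, h1, h2⟩,
        show (p.1, MulOpposite.op p.2.unop) = p from by rw [MulOpposite.op_unop]⟩
  rw [this]
  apply IsClosed.inter
  · exact isClosed_eq (continuous_fst.mul (MulOpposite.continuous_unop.comp continuous_snd))
      continuous_const
  · exact isClosed_eq ((MulOpposite.continuous_unop.comp continuous_snd).mul continuous_fst)
      continuous_const

instance : LocallyCompactSpace (GL (Fin 3) ℝ) :=
  isClosedEmbedding_embedProduct.locallyCompactSpace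

lemma continuous_glval : Continuous (fun g : GL (Fin 3) ℝ => (g : M3)) :=
  Units.continuous_val

lemma isClosed_SO21 : IsClosed (SO21.carrier : Set (GL (Fin 3) ℝ)) := by
  apply IsClosed.inter
  · exact isClosed_eq (continuous_glval.matrix_det) continuous_const
  · exact isClosed_eq (((continuous_glval.matrix_transpose.matrix_mul
      continuous_const).matrix_mul continuous_glval)) continuous_const

instance : LocallyCompactSpace ↥SO21 := isClosed_SO21.locallyCompactSpace

lemma isClosed_SO21c : IsClosed (SO21c.carrier : Set ↥SO21) :=
  isClosed_connectedComponent

instance : LocallyCompactSpace ↥SO21c := isClosed_SO21c.locallyCompactSpace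

example : T2Space ↥SO21c := inferInstance
example : RegularSpace ↥SO21c := inferInstance
example : IsTopologicalGroup ↥SO21c := inferInstance

lemma continuous_toM : Continuous toM :=
  (continuous_glval.comp continuous_subtype_val).comp continuous_subtype_val

end Topo
section Form

lemma Jmat_eq : Jmat = !![1,0,0; 0,1,0; 0,0,-1] := by
  ext i j; fin_cases i <;> fin_cases j <;>
    simp [Jmat, Matrix.vecHead, Matrix.vecTail]

lemma toM_det (g : ↥SO21c) : (toM g).det = 1 := g.1.2.1

lemma toM_form (g : ↥SO21c) : (toM g)ᵀ * Jmat * toM g = Jmat := g.1.2.2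

lemma form_entry (g : ↥SO21c) (i j : Fin 3) :
    (toM g) 0 i * (toM g) 0 j + (toM g) 1 i * (toM g) 1 j
      - (toM g) 2 i * (toM g) 2 j = Jmat i j := by
  have h2 := congrFun (congrFun (toM_form g) i) j
  simp only [Matrix.mul_apply, Fin.sum_univ_three, Matrix.transpose_apply] at h2
  fin_cases i <;> fin_cases j <;>
    simp only [Jmat_eq] at h2 ⊢ <;>
    norm_num [Matrix.vecHead, Matrix.vecTail, Matrix.cons_val_two] at h2 ⊢ <;> linarith [h2]

lemma toM_22_pos (g : ↥SO21c) : 0 < toM g 2 2 := by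
  set f : ↥SO21 → ℝ := fun h => ((h : GL (Fin 3) ℝ) : M3) 2 2 with hf
  have hfc : Continuous f :=
    (continuous_apply_apply 2 2).comp (continuous_glval.comp continuous_subtype_val)
  have hne : ∀ h : ↥SO21, f h ≠ 0 := by
    intro h hzero
    have h2 := congrFun (congrFun h.2.2 2) 2
    simp only [Matrix.mul_apply, Fin.sum_univ_three, Matrix.transpose_apply, Jmat_eq] at h2
    norm_num [Matrix.vecHead, Matrix.vecTail, Matrix.cons_val_two] at h2
    simp only [hf] at hzero
    nlinarith [sq_nonneg (((h : GL (Fin 3) ℝ) : M3) 0 2),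
      sq_nonneg (((h : GL (Fin 3) ℝ) : M3) 1 2)]
  have hopen : IsOpen {h : ↥SO21 | 0 < f h} := isOpen_lt continuous_const hfc
  have hclosed : IsClosed {h : ↥SO21 | 0 < f h} := by
    have he : {h : ↥SO21 | 0 < f h} = {h : ↥SO21 | 0 ≤ f h} := by
      ext h
      simp only [Set.mem_setOf_eq]
      exact ⟨le_of_lt, fun hle => lt_of_le_of_ne hle (Ne.symm (hne h))⟩
    rw [he]; exact isClosed_le continuous_const hfc
  have h1 : (1 : ↥SO21) ∈ {h : ↥SO21 | 0 < f h} := by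
    show (0:ℝ) < ((1 : GL (Fin 3) ℝ) : M3) 2 2
    simp [Matrix.one_apply]
  exact IsClopen.connectedComponent_subset ⟨hclosed, hopen⟩ h1 g.2

end Form
section Stab

private lemma aux_sq_zero {a b : ℝ} (h : a^2 + b^2 = 0) : a = 0 ∧ b = 0 :=
  ⟨by nlinarith [sq_nonneg a, sq_nonneg b], by nlinarith [sq_nonneg a, sq_nonneg b]⟩

private lemma aux_cos_sin {c s : ℝ} (h : (c - 1)^2 + s^2 = 0) : c = 1 ∧ s = 0 := by
  obtain ⟨h1, h2⟩ := aux_sq_zero h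
  exact ⟨by linarith, h2⟩

private lemma aux_sqrt_one {a : ℝ} (h : a * a = 1) (hp : 0 < a) : a = 1 := by nlinarith

set_option maxHeartbeats 800000 in
lemma stab_cos (x : ↥SO21c) (θ₁ θ₂ : ℝ) (h : kG θ₁ * x * kG θ₂ = x) :
    Real.cos (θ₁ + θ₂) = 1 := by
  have hm : kmat θ₁ * toM x * kmat θ₂ = toM x := by
    have := congrArg toM h
    rwa [toM_mul, toM_mul, toM_kG, toM_kG] at this
  set A := toM x with hA
  clear_value A
  have E02 := congrFun (congrFun hm 0) 2
  have E12 := congrFun (congrFun hm 1) 2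
  have E20 := congrFun (congrFun hm 2) 0
  have E21 := congrFun (congrFun hm 2) 1
  have E00 := congrFun (congrFun hm 0) 0
  have E10 := congrFun (congrFun hm 1) 0
  simp only [Matrix.mul_apply, Fin.sum_univ_three, kmat] at E02 E12 E20 E21 E00 E10
  norm_num [Matrix.vecHead, Matrix.vecTail, Matrix.cons_val_two] at E02 E12 E20 E21 E00 E10
  have C := Real.cos_add θ₁ θ₂
  have S := Real.sin_add θ₁ θ₂
  by_cases hcol : A 0 2 = 0 ∧ A 1 2 = 0
  · by_cases hrow : A 2 0 = 0 ∧ A 2 1 = 0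
    · -- case C : x is essentially a rotation
      obtain ⟨hq1, hq2⟩ := hcol; obtain ⟨hr1, hr2⟩ := hrow
      have f22 := form_entry x 2 2
      have f00 := form_entry x 0 0
      have f11 := form_entry x 1 1
      have f01 := form_entry x 0 1
      simp only [Jmat_eq, ← hA] at f22 f00 f11 f01
      norm_num [Matrix.vecHead, Matrix.vecTail, Matrix.cons_val_two, hq1, hq2, hr1, hr2] at f22 f00 f11 f01
      have h22pos : 0 < A 2 2 := by rw [hA]; exact toM_22_pos x
      have h22 : A 2 2 = 1 := aux_sqrt_one f22 h22pos
      have hdet := toM_det x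
      rw [Matrix.det_fin_three, ← hA] at hdet
      rw [hq1, hq2, hr1, hr2, h22] at hdet
      have hz : (A 1 1 - A 0 0)^2 + (A 0 1 + A 1 0)^2 = 0 := by
        linear_combination f00 + f11 - 2 * hdet
      have h11 : A 1 1 = A 0 0 := by
        have := (aux_sq_zero hz).1; linarith
      have h01 : A 0 1 = - A 1 0 := by
        have := (aux_sq_zero hz).2; linarith
      rw [h11, h01] at E00 E10
      have e1 : (Real.cos (θ₁+θ₂) - 1) * A 0 0 - Real.sin (θ₁+θ₂) * A 1 0 = 0 := by
        rw [C, S]; linear_combination E00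
      have e2 : Real.sin (θ₁+θ₂) * A 0 0 + (Real.cos (θ₁+θ₂) - 1) * A 1 0 = 0 := by
        rw [C, S]; linear_combination E10
      have key : ((Real.cos (θ₁+θ₂) - 1)^2 + Real.sin (θ₁+θ₂)^2) * (A 0 0^2 + A 1 0^2) = 0 := by
        linear_combination ((Real.cos (θ₁+θ₂) - 1) * A 0 0 - Real.sin (θ₁+θ₂) * A 1 0) * e1
          + (Real.sin (θ₁+θ₂) * A 0 0 + (Real.cos (θ₁+θ₂) - 1) * A 1 0) * e2
      have hone : A 0 0^2 + A 1 0^2 = 1 := by linear_combination f00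
      have hsq : (Real.cos (θ₁+θ₂) - 1)^2 + Real.sin (θ₁+θ₂)^2 = 0 := by
        linear_combination key - ((Real.cos (θ₁+θ₂) - 1)^2 + Real.sin (θ₁+θ₂)^2) * hone
      have := (aux_cos_sin hsq).1; linarith
    · -- case B : row nonzero ⇒ k θ₂ = 1 then k θ₁ = 1
      have hpos : 0 < A 2 0^2 + A 2 1^2 := by
        rcases not_and_or.mp hrow with h' | h' <;> positivity
      have e1 : (Real.cos θ₂ - 1) * A 2 0 + Real.sin θ₂ * A 2 1 = 0 := by linear_combination E20
      have e2 : - Real.sin θ₂ * A 2 0 + (Real.cos θ₂ - 1) * A 2 1 = 0 := by linear_combination E21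
      have key : ((Real.cos θ₂ - 1)^2 + Real.sin θ₂^2) * (A 2 0^2 + A 2 1^2) = 0 := by
        linear_combination ((Real.cos θ₂ - 1) * A 2 0 + Real.sin θ₂ * A 2 1) * e1
          + (- Real.sin θ₂ * A 2 0 + (Real.cos θ₂ - 1) * A 2 1) * e2
      have hsq : (Real.cos θ₂ - 1)^2 + Real.sin θ₂^2 = 0 :=
        (mul_eq_zero.mp key).resolve_right (ne_of_gt hpos)
      have hc : Real.cos θ₂ = 1 := (aux_cos_sin hsq).1
      have hs : Real.sin θ₂ = 0 := (aux_cos_sin hsq).2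
      have hk2 : kG θ₂ = 1 := kG_eq_one hc hs
      rw [hk2, mul_one] at h
      have hk1 : kG θ₁ = 1 := mul_right_cancel (b := x) (by rw [one_mul]; exact h)
      have hm1 : kmat θ₁ = 1 := by
        have := congrArg toM hk1; rwa [toM_kG, toM_one] at this
      have c1e := congrFun (congrFun hm1 0) 0
      have s1e := congrFun (congrFun hm1 1) 0
      norm_num [kmat, Matrix.one_apply, Matrix.vecHead, Matrix.vecTail] at c1e s1e
      rw [C, c1e, s1e, hc, hs]; ring
  · -- case A : column nonzero ⇒ k θ₁ = 1 then k θ₂ = 1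
    have hpos : 0 < A 0 2^2 + A 1 2^2 := by
      rcases not_and_or.mp hcol with h' | h' <;> positivity
    have e1 : (Real.cos θ₁ - 1) * A 0 2 - Real.sin θ₁ * A 1 2 = 0 := by linear_combination E02
    have e2 : Real.sin θ₁ * A 0 2 + (Real.cos θ₁ - 1) * A 1 2 = 0 := by linear_combination E12
    have key : ((Real.cos θ₁ - 1)^2 + Real.sin θ₁^2) * (A 0 2^2 + A 1 2^2) = 0 := by
      linear_combination ((Real.cos θ₁ - 1) * A 0 2 - Real.sin θ₁ * A 1 2) * e1
        + (Real.sin θ₁ * A 0 2 + (Real.cos θ₁ - 1) * A 1 2) * e2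
    have hsq : (Real.cos θ₁ - 1)^2 + Real.sin θ₁^2 = 0 :=
      (mul_eq_zero.mp key).resolve_right (ne_of_gt hpos)
    have hc : Real.cos θ₁ = 1 := (aux_cos_sin hsq).1
    have hs : Real.sin θ₁ = 0 := (aux_cos_sin hsq).2
    have hk1 : kG θ₁ = 1 := kG_eq_one hc hs
    rw [hk1, one_mul] at h
    have hk2 : kG θ₂ = 1 := mul_left_cancel (a := x) (by rw [mul_one]; exact h)
    have hm2 : kmat θ₂ = 1 := by
      have := congrArg toM hk2; rwa [toM_kG, toM_one] at this
    have c2e := congrFun (congrFun hm2 0) 0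
    have s2e := congrFun (congrFun hm2 1) 0
    norm_num [kmat, Matrix.one_apply, Matrix.vecHead, Matrix.vecTail] at c2e s2e
    rw [C, c2e, s2e, hc, hs]; ring

end Stab
section Shift
open Real intervalIntegral

lemma two_pi_pos' : (0:ℝ) < 2 * Real.pi := by positivity

lemma reduce_angle (θ : ℝ) :
    ∃ m : ℤ, θ + m * (2*Real.pi) ∈ Set.Ico (0:ℝ) (2*Real.pi) := by
  refine ⟨-⌊θ/(2*Real.pi)⌋, ?_⟩
  have hf1 := Int.fract_nonneg (θ/(2*Real.pi))
  have hf2 := Int.fract_lt_one (θ/(2*Real.pi))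
  have he : θ + (-⌊θ/(2*Real.pi)⌋ : ℤ) * (2*Real.pi)
      = (2*Real.pi) * Int.fract (θ/(2*Real.pi)) := by
    rw [Int.fract]
    push_cast
    have : θ / (2*Real.pi) * (2*Real.pi) = θ := by
      field_simp
    nlinarith [this]
  rw [he]
  constructor
  · positivity
  · nlinarith [two_pi_pos']

lemma kG_add_int (θ : ℝ) (m : ℤ) : kG (θ + m * (2*Real.pi)) = kG θ :=
  (kG_periodic.int_mul m) θ

lemma exp_periodic (n : ℤ) :
    Function.Periodic (fun t : ℝ => Complex.exp ((n:ℂ) * t * Complex.I)) (2*Real.pi) := by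
  intro t
  simp only
  have : (n:ℂ) * ((t + 2*Real.pi : ℝ) : ℂ) * Complex.I
      = (n:ℂ) * t * Complex.I + n * (2 * Real.pi * Complex.I) := by push_cast; ring
  rw [this, Complex.exp_add, Complex.exp_int_mul_two_pi_mul_I, mul_one]

lemma per_shift (n : ℤ) (q : ℝ → ℂ) (hq : Function.Periodic q (2*Real.pi)) (b : ℝ) :
    (∫ θ in (0:ℝ)..(2*Real.pi), Complex.exp ((n:ℂ) * θ * Complex.I) * q (θ - b))
      = Complex.exp ((n:ℂ) * b * Complex.I)
        * ∫ θ in (0:ℝ)..(2*Real.pi), Complex.exp ((n:ℂ) * θ * Complex.I) * q θ := by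
  set H : ℝ → ℂ := fun t => Complex.exp ((n:ℂ) * t * Complex.I) * q t with hH
  have hHper : Function.Periodic H (2*Real.pi) := by
    intro t
    show Complex.exp ((n:ℂ) * ((t + 2*Real.pi : ℝ) : ℂ) * Complex.I) * q (t + 2*Real.pi)
      = Complex.exp ((n:ℂ) * t * Complex.I) * q t
    rw [hq t]
    congr 1
    simpa using exp_periodic n t

  have step1 : (∫ θ in (0:ℝ)..(2*Real.pi), Complex.exp ((n:ℂ) * θ * Complex.I) * q (θ - b))
      = ∫ θ in (0:ℝ)..(2*Real.pi), Complex.exp ((n:ℂ) * b * Complex.I) * H (θ - b) := by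
    apply intervalIntegral.integral_congr
    intro θ _
    simp only [hH]
    rw [← mul_assoc, ← Complex.exp_add]
    congr 2
    push_cast
    ring
  rw [step1, intervalIntegral.integral_const_mul]
  congr 1
  rw [intervalIntegral.integral_comp_sub_right (fun t => H t) b]
  have h0 : (0:ℝ) - b = -b := by ring
  have h1 : (2*Real.pi) - b = -b + 2*Real.pi := by ring
  rw [h0, h1]
  simpa using hHper.intervalIntegral_add_eq (-b) 0

end Shift
section Main
open Real intervalIntegral

lemma kG_neg (θ : ℝ) : kG (-θ) = (kG θ)⁻¹ := by
  apply eq_inv_of_mul_eq_one_left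
  rw [kG_mul, neg_add_cancel, kG_zero]

lemma kG_sandwich (g : ↥SO21c) (a b : ℝ) :
    kG (-a) * (kG a * g * kG b) * kG (-b) = g := by
  rw [kG_neg, kG_neg]
  group

lemma kG_sandwich' (g : ↥SO21c) (a b : ℝ) :
    kG a * (kG (-a) * g * kG (-b)) * kG b = g := by
  have h := kG_sandwich g (-a) (-b)
  simpa using h

lemma kG_neg_per (t : ℝ) : kG (-(t + 2*Real.pi)) = kG (-t) := by
  rw [show -(t + 2*Real.pi) = -t + (-1 : ℤ) * (2*Real.pi) by push_cast; ring, kG_add_int]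

lemma pos_integral {h : ℝ → ℝ} (hc : Continuous h) (hnn : ∀ t, 0 ≤ h t) (h0 : 0 < h 0) :
    0 < ∫ t in (0:ℝ)..(2*Real.pi), h t := by
  rw [intervalIntegral.integral_pos_iff_support_of_nonneg_ae
    (Filter.Eventually.of_forall hnn) ((hc.intervalIntegrable _ _))]
  refine ⟨two_pi_pos', ?_⟩
  obtain ⟨δ, hδpos, hδ⟩ := Metric.continuousAt_iff.mp hc.continuousAt (h 0) h0
  set ε := min δ (2*Real.pi) with hε
  have hεpos : 0 < ε := lt_min hδpos two_pi_pos'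
  have hsub : Set.Ioo 0 ε ⊆ Function.support h ∩ Set.Ioc 0 (2*Real.pi) := by
    intro t ht
    constructor
    · have hd : dist t 0 < δ := by
        rw [Real.dist_eq, sub_zero, abs_of_pos ht.1]
        exact lt_of_lt_of_le ht.2 (min_le_left _ _)
      have := hδ hd
      rw [Real.dist_eq] at this
      have : h t > 0 := by
        cases' abs_lt.mp this with h1 h2
        linarith
      exact ne_of_gt this
    · exact ⟨ht.1, le_of_lt (lt_of_lt_of_le ht.2 (min_le_right _ _))⟩
  calc (0:ENNReal) < volume (Set.Ioo 0 ε) := by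
        rw [Real.volume_Ioo]
        simp only [sub_zero]
        exact ENNReal.ofReal_pos.mpr hεpos
    _ ≤ volume (Function.support h ∩ Set.Ioc 0 (2*Real.pi)) := measure_mono hsub

lemma exp_mul_real_re (n : ℤ) (t r : ℝ) :
    (Complex.exp ((n:ℂ) * t * Complex.I) * (r:ℂ)).re = Real.cos ((n:ℝ) * t) * r := by
  rw [show (n:ℂ) * t * Complex.I = (((n:ℝ) * t : ℝ) : ℂ) * Complex.I by push_cast; ring]
  rw [Complex.mul_re, Complex.ofReal_re, Complex.ofReal_im, mul_zero, sub_zero,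
    Complex.exp_ofReal_mul_I_re]

lemma re_intervalIntegral {f : ℝ → ℂ} (hf : Continuous f) (a b : ℝ) :
    (∫ t in a..b, f t).re = ∫ t in a..b, (f t).re :=
  (Complex.reCLM.intervalIntegral_comp_comm (hf.intervalIntegrable a b)).symm

set_option maxHeartbeats 2000000 in
/-- Separation of `K×K`-orbits by `τ_n`-bi-equivariant functions: if `x, y ∈ G = SO(2,1)°`
have disjoint `K×K`-orbits (i.e. `y ∉ KxK`), then there is a continuous, compactly
supported, `τ_n`-bi-equivariant function `F : G → ℂ` with `F(x) ≠ F(y)`. -/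
theorem bi_equivariant_separates_KxK_orbits
    (n : ℤ) (x y : ↥SO21c)
    (hxy : ∀ θ₁ θ₂ : ℝ, y ≠ kG θ₁ * x * kG θ₂) :
    ∃ F : ↥SO21c → ℂ, Continuous F ∧ HasCompactSupport F ∧
      (∀ (g : ↥SO21c) (θ₁ θ₂ : ℝ),
        F (kG θ₁ * g * kG θ₂) = Complex.exp ((n : ℂ) * (θ₁ + θ₂) * Complex.I) * F g) ∧
      F x ≠ F y := by

  classical
  set box : Set (ℝ × ℝ) := Set.Icc (0:ℝ) (2*Real.pi) ×ˢ Set.Icc (0:ℝ) (2*Real.pi) with hbox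
  have hboxc : IsCompact box := isCompact_Icc.prod isCompact_Icc
  have hcosc : Continuous (fun p : ℝ × ℝ => Real.cos ((n:ℝ) * (p.1 + p.2))) :=
    Real.continuous_cos.comp (continuous_const.mul (continuous_fst.add continuous_snd))
  set C : Set (ℝ × ℝ) :=
    box ∩ (fun p : ℝ × ℝ => Real.cos ((n:ℝ) * (p.1 + p.2))) ⁻¹' Set.Iic (1/2) with hC
  have hCc : IsCompact C := hboxc.inter_right (isClosed_Iic.preimage hcosc)
  have hmulx : Continuous (fun p : ℝ × ℝ => kG p.1 * x * kG p.2) :=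
    ((continuous_kG.comp continuous_fst).mul continuous_const).mul
      (continuous_kG.comp continuous_snd)
  have hmuly : Continuous (fun p : ℝ × ℝ => kG p.1 * y * kG p.2) :=
    ((continuous_kG.comp continuous_fst).mul continuous_const).mul
      (continuous_kG.comp continuous_snd)
  set D : Set ↥SO21c := (fun p : ℝ × ℝ => kG p.1 * x * kG p.2) '' C with hD
  have hDc : IsCompact D := hCc.image hmulx
  set KyK : Set ↥SO21c := (fun p : ℝ × ℝ => kG p.1 * y * kG p.2) '' box with hKyK
  have hKyKc : IsCompact KyK := hboxc.image hmuly
  -- x avoids both compact sets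
  have hxD : x ∉ D := by
    rintro ⟨⟨a, b⟩, hpC, hpe⟩
    have hcos1 := stab_cos x a b hpe
    obtain ⟨m, hm⟩ := (Real.cos_eq_one_iff _).mp hcos1
    have : Real.cos ((n:ℝ) * (a + b)) = 1 := by
      rw [show (n:ℝ) * (a + b) = ((n * m : ℤ) : ℝ) * (2 * Real.pi) by push_cast; rw [← hm]; ring]
      exact Real.cos_int_mul_two_pi _
    have hle : Real.cos ((n:ℝ) * (a + b)) ≤ 1/2 := hpC.2
    linarith
  have hxKyK : x ∉ KyK := by
    rintro ⟨⟨a, b⟩, _, hpe⟩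
    exact hxy (-a) (-b) (by rw [← hpe, kG_sandwich])
  -- bump function
  obtain ⟨ψ, hψ1, hψ0, hψsupp, hψrange⟩ :=
    exists_continuous_one_zero_of_isCompact (isCompact_singleton : IsCompact {x})
      (hDc.isClosed.union hKyKc.isClosed)
      (by
        rw [Set.disjoint_left]
        intro z hz
        rw [Set.mem_singleton_iff] at hz
        subst hz
        rintro (h | h)
        exacts [hxD h, hxKyK h])
  have hψx : ψ x = 1 := hψ1 (Set.mem_singleton x)
  have hψ0' : ∀ z ∈ D ∪ KyK, ψ z = 0 := fun z hz => hψ0 hz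
  have hψnn : ∀ z, 0 ≤ ψ z := fun z => (hψrange z).1
  -- the function F
  set In : ↥SO21c → ℂ := fun w =>
    ∫ θ in (0:ℝ)..(2*Real.pi), Complex.exp ((n:ℂ) * θ * Complex.I) * (ψ (w * kG (-θ)) : ℂ)
    with hIn
  have huncurry : Continuous (fun p : ↥SO21c × ℝ =>
      Complex.exp ((n:ℂ) * p.2 * Complex.I) * (ψ (p.1 * kG (-p.2)) : ℂ)) := by
    apply Continuous.mul
    · exact Complex.continuous_exp.comp
        ((continuous_const.mul (Complex.continuous_ofReal.comp continuous_snd)).mul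
          continuous_const)
    · exact Complex.continuous_ofReal.comp (ψ.continuous.comp
        (continuous_fst.mul (continuous_kG.comp continuous_snd.neg)))
  have hInc : Continuous In :=
    intervalIntegral.continuous_parametric_intervalIntegral_of_continuous'
      (f := fun w θ => Complex.exp ((n:ℂ) * θ * Complex.I) * (ψ (w * kG (-θ)) : ℂ))
      (μ := volume) huncurry 0 (2*Real.pi)
  set F : ↥SO21c → ℂ := fun g =>
    ∫ θ in (0:ℝ)..(2*Real.pi), Complex.exp ((n:ℂ) * θ * Complex.I) * In (kG (-θ) * g)
    with hF
  have huncurry2 : Continuous (fun p : ↥SO21c × ℝ =>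
      Complex.exp ((n:ℂ) * p.2 * Complex.I) * In (kG (-p.2) * p.1)) := by
    apply Continuous.mul
    · exact Complex.continuous_exp.comp
        ((continuous_const.mul (Complex.continuous_ofReal.comp continuous_snd)).mul
          continuous_const)
    · exact hInc.comp ((continuous_kG.comp continuous_snd.neg).mul continuous_fst)
  have hFc : Continuous F :=
    intervalIntegral.continuous_parametric_intervalIntegral_of_continuous'
      (f := fun g θ => Complex.exp ((n:ℂ) * θ * Complex.I) * In (kG (-θ) * g))
      (μ := volume) huncurry2 0 (2*Real.pi)
  -- key: vanishing of ψ off orbit forces F = 0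
  have hInzero : ∀ w : ↥SO21c, (∀ θ : ℝ, ψ (w * kG (-θ)) = 0) → In w = 0 := by
    intro w hw
    rw [hIn]
    simp only
    calc (∫ θ in (0:ℝ)..(2*Real.pi), Complex.exp ((n:ℂ) * θ * Complex.I) * (ψ (w * kG (-θ)) : ℂ))
        = ∫ θ in (0:ℝ)..(2*Real.pi), (0:ℂ) := by
          apply intervalIntegral.integral_congr
          intro θ _
          simp [hw θ]
      _ = 0 := intervalIntegral.integral_zero
  have hFzero : ∀ g : ↥SO21c, (∀ θ₁ θ₂ : ℝ, ψ (kG (-θ₁) * g * kG (-θ₂)) = 0) → F g = 0 := by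
    intro g hg
    rw [hF]
    simp only
    calc (∫ θ in (0:ℝ)..(2*Real.pi), Complex.exp ((n:ℂ) * θ * Complex.I) * In (kG (-θ) * g))
        = ∫ θ in (0:ℝ)..(2*Real.pi), (0:ℂ) := by
          apply intervalIntegral.integral_congr
          intro θ _
          simp [hInzero (kG (-θ) * g) (fun θ₂ => hg θ θ₂)]
      _ = 0 := intervalIntegral.integral_zero
  refine ⟨F, hFc, ?_, ?_, ?_⟩
  -- compact support
  · set Kc : Set ↥SO21c :=
      (fun q : (ℝ × ℝ) × ↥SO21c => kG q.1.1 * q.2 * kG q.1.2) '' (box ×ˢ tsupport ψ) with hKc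
    have hKcc : IsCompact Kc := by
      apply IsCompact.image (hboxc.prod hψsupp)
      exact ((continuous_kG.comp (continuous_fst.fst)).mul continuous_snd).mul
        (continuous_kG.comp (continuous_fst.snd))
    apply HasCompactSupport.intro hKcc
    intro g hg
    apply hFzero
    intro θ₁ θ₂
    by_contra hne
    have hzsupp : kG (-θ₁) * g * kG (-θ₂) ∈ tsupport ψ :=
      subset_tsupport _ hne
    obtain ⟨m₁, hm₁⟩ := reduce_angle θ₁
    obtain ⟨m₂, hm₂⟩ := reduce_angle θ₂
    apply hg
    refine ⟨⟨(θ₁ + m₁ * (2*Real.pi), θ₂ + m₂ * (2*Real.pi)), kG (-θ₁) * g * kG (-θ₂)⟩,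
      ⟨⟨Set.Ico_subset_Icc_self hm₁, Set.Ico_subset_Icc_self hm₂⟩, hzsupp⟩, ?_⟩
    simp only [kG_add_int]
    rw [kG_sandwich']
  -- equivariance
  · intro g a b
    have hq : ∀ w : ↥SO21c, Function.Periodic (fun t => (ψ (w * kG (-t)) : ℂ)) (2*Real.pi) := by
      intro w t
      simp only [kG_neg_per]
    have stepA : ∀ w : ↥SO21c, In (w * kG b) = Complex.exp ((n:ℂ) * b * Complex.I) * In w := by
      intro w
      rw [hIn]
      simp only
      have : (∫ θ in (0:ℝ)..(2*Real.pi),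
            Complex.exp ((n:ℂ) * θ * Complex.I) * (ψ (w * kG b * kG (-θ)) : ℂ))
          = ∫ θ in (0:ℝ)..(2*Real.pi),
            Complex.exp ((n:ℂ) * θ * Complex.I) * (ψ (w * kG (-(θ - b))) : ℂ) := by
        apply intervalIntegral.integral_congr
        intro θ _
        beta_reduce
        congr 2
        rw [mul_assoc, kG_mul]
        congr 2
        ring
      rw [this]
      exact per_shift n (fun t => (ψ (w * kG (-t)) : ℂ)) (hq w) b
    have main : F (kG a * g * kG b) =
        Complex.exp ((n:ℂ) * b * Complex.I) *
          ∫ θ in (0:ℝ)..(2*Real.pi),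
            Complex.exp ((n:ℂ) * θ * Complex.I) * In (kG (-(θ - a)) * g) := by
      rw [hF]
      simp only
      rw [← intervalIntegral.integral_const_mul]
      apply intervalIntegral.integral_congr
      intro θ _
      beta_reduce
      have harg : kG (-θ) * (kG a * g * kG b) = (kG (-(θ - a)) * g) * kG b := by
        rw [show -(θ - a) = -θ + a by ring, ← kG_mul]
        group
      rw [harg, stepA]
      ring
    have hQper : Function.Periodic (fun t => In (kG (-t) * g)) (2*Real.pi) := by
      intro t
      simp only [kG_neg_per]
    rw [main, per_shift n (fun t => In (kG (-t) * g)) hQper a]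
    show Complex.exp ((n:ℂ) * b * Complex.I) * (Complex.exp ((n:ℂ) * a * Complex.I) * F g)
      = Complex.exp ((n:ℂ) * ((a:ℂ) + (b:ℂ)) * Complex.I) * F g
    rw [← mul_assoc, ← Complex.exp_add]
    congr 2
    push_cast
    ring
  -- separation
  · have hFy : F y = 0 := by
      apply hFzero
      intro θ₁ θ₂
      obtain ⟨m₁, hm₁⟩ := reduce_angle (-θ₁)
      obtain ⟨m₂, hm₂⟩ := reduce_angle (-θ₂)
      apply hψ0'
      right
      refine ⟨(-θ₁ + m₁ * (2*Real.pi), -θ₂ + m₂ * (2*Real.pi)),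
        ⟨Set.Ico_subset_Icc_self hm₁, Set.Ico_subset_Icc_self hm₂⟩, ?_⟩
      simp only [kG_add_int]
    -- positivity of real part at x
    set u : ℝ → ℝ → ℝ := fun θ₁ θ₂ =>
      Real.cos ((n:ℝ) * (θ₁ + θ₂)) * ψ (kG (-θ₁) * x * kG (-θ₂)) with hu
    have hucont : Continuous (fun p : ℝ × ℝ => u p.1 p.2) := by
      apply Continuous.mul hcosc
      exact ψ.continuous.comp
        (((continuous_kG.comp continuous_fst.neg).mul continuous_const).mul
          (continuous_kG.comp continuous_snd.neg))
    have hunn : ∀ θ₁ θ₂ : ℝ, 0 ≤ u θ₁ θ₂ := by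
      intro θ₁ θ₂
      rcases eq_or_ne (ψ (kG (-θ₁) * x * kG (-θ₂))) 0 with h0 | h0
      · rw [hu]; simp only [h0, mul_zero, le_refl]
      · have hψpos : 0 < ψ (kG (-θ₁) * x * kG (-θ₂)) :=
          lt_of_le_of_ne (hψnn _) (Ne.symm h0)
        obtain ⟨m₁, hm₁⟩ := reduce_angle (-θ₁)
        obtain ⟨m₂, hm₂⟩ := reduce_angle (-θ₂)
        set a := -θ₁ + m₁ * (2*Real.pi) with ha
        set b := -θ₂ + m₂ * (2*Real.pi) with hb
        have hze : kG (-θ₁) * x * kG (-θ₂) = kG a * x * kG b := by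
          rw [ha, hb]; simp only [kG_add_int]
        have hcosgt : 1/2 < Real.cos ((n:ℝ) * (a + b)) := by
          by_contra hle
          push_neg at hle
          have : kG (-θ₁) * x * kG (-θ₂) ∈ D := by
            rw [hze]
            exact ⟨(a, b), ⟨⟨Set.Ico_subset_Icc_self hm₁, Set.Ico_subset_Icc_self hm₂⟩, hle⟩, rfl⟩
          rw [hψ0' _ (Set.mem_union_left _ this)] at hψpos
          exact lt_irrefl 0 hψpos
        have hcoseq : Real.cos ((n:ℝ) * (a + b)) = Real.cos ((n:ℝ) * (θ₁ + θ₂)) := by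
          rw [show (n:ℝ) * (a + b)
              = -((n:ℝ) * (θ₁ + θ₂)) + ((n * (m₁ + m₂) : ℤ) : ℝ) * (2 * Real.pi) by
            rw [ha, hb]; push_cast; ring]
          rw [Real.cos_add_int_mul_two_pi, Real.cos_neg]
        rw [hu]
        simp only
        apply mul_nonneg _ (le_of_lt hψpos)
        rw [← hcoseq]
        linarith
      -- end hunn
    have hu00 : u 0 0 = 1 := by
      rw [hu]
      simp only [neg_zero, kG_zero, one_mul, mul_one, add_zero, mul_zero, Real.cos_zero]
      rw [hψx]
    set v : ℝ → ℝ := fun θ₁ => ∫ θ₂ in (0:ℝ)..(2*Real.pi), u θ₁ θ₂ with hv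
    have hvc : Continuous v :=
      intervalIntegral.continuous_parametric_intervalIntegral_of_continuous'
        (f := u) (μ := volume) hucont 0 (2*Real.pi)
    have hvnn : ∀ t, 0 ≤ v t := fun t =>
      intervalIntegral.integral_nonneg (le_of_lt two_pi_pos') (fun s _ => hunn t s)
    have hv0 : 0 < v 0 := by
      apply pos_integral (by fun_prop) (hunn 0)
      rw [hu00]; norm_num
    have hvpos : 0 < ∫ t in (0:ℝ)..(2*Real.pi), v t := pos_integral hvc hvnn hv0
    -- identify (F x).re with the double integral of u
    have hre : (F x).re = ∫ t in (0:ℝ)..(2*Real.pi), v t := by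
      rw [hF]
      simp only
      have hc1 : Continuous (fun θ : ℝ =>
          Complex.exp ((n:ℂ) * θ * Complex.I) * In (kG (-θ) * x)) := by
        apply Continuous.mul
        · exact Complex.continuous_exp.comp
            ((continuous_const.mul Complex.continuous_ofReal).mul continuous_const)
        · exact hInc.comp ((continuous_kG.comp continuous_neg).mul continuous_const)
      rw [re_intervalIntegral hc1]
      apply intervalIntegral.integral_congr
      intro θ₁ _
      beta_reduce
      rw [hv]
      -- pull the constant inside the inner integral
      have hinner : Complex.exp ((n:ℂ) * θ₁ * Complex.I) * In (kG (-θ₁) * x)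
          = ∫ θ₂ in (0:ℝ)..(2*Real.pi),
              Complex.exp ((n:ℂ) * (θ₁ + θ₂) * Complex.I)
                * (ψ (kG (-θ₁) * x * kG (-θ₂)) : ℂ) := by
        rw [hIn]
        simp only
        rw [← intervalIntegral.integral_const_mul]
        apply intervalIntegral.integral_congr
        intro θ₂ _
        beta_reduce
        rw [← mul_assoc, ← Complex.exp_add]
        congr 2
        push_cast
        ring
      rw [hinner]
      have hintc : Continuous (fun θ₂ : ℝ =>
          Complex.exp ((n:ℂ) * (θ₁ + θ₂) * Complex.I)
            * (ψ (kG (-θ₁) * x * kG (-θ₂)) : ℂ)) := by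
        apply Continuous.mul
        · exact Complex.continuous_exp.comp
            ((continuous_const.mul (continuous_const.add
              (Complex.continuous_ofReal.comp continuous_id))).mul continuous_const)
        · exact Complex.continuous_ofReal.comp (ψ.continuous.comp
            (continuous_const.mul (continuous_kG.comp continuous_neg)))
      rw [re_intervalIntegral hintc]
      apply intervalIntegral.integral_congr
      intro θ₂ _
      beta_reduce
      have h2 := exp_mul_real_re n (θ₁ + θ₂) (ψ (kG (-θ₁) * x * kG (-θ₂)))
      push_cast at h2 ⊢
      rw [hu]
      exact h2
    rw [hFy]
    intro hFx0
    rw [hFx0] at hre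
    simp only [Complex.zero_re] at hre
    linarith [hvpos, hre]
end Main
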